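/- Let d be a squarefree positive integer, K = ℚ(√(-d)), O_K its ring of integers. Let x₁,…,xₙ ∈ O_K and set y = 2·∏_{k=1}^n (3xₖ+1). Then y + ∑_{k=1}^n xₖ/yᵏ ∈ ℚ if and only if x₁,…,xₙ ∈ ℤ. -/

import Mathlib

open NumberField

private lemma ratint {F : Type*} [Field F] [CharZero F] {r : ℚ}
    (h : IsIntegral ℤ (algebraMap ℚ F r)) : ∃ m : ℤ, (m : ℚ) = r := by
  have h2 : IsIntegral ℤ r :=
    (isIntegral_algebraMap_iff (algebraMap ℚ F).injective).mp h
  exact IsIntegrallyClosed.isIntegral_iff.mp h2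

private lemma prod_ge_one {ι : Type*} (s : Finset ι) (f : ι → ℝ)
    (h : ∀ i ∈ s, 1 ≤ f i) : 1 ≤ ∏ i ∈ s, f i := by
  induction s using Finset.cons_induction with
  | empty => simp
  | cons a s ha ih =>
    rw [Finset.prod_cons]
    have h1 := h a (by simp)
    have h2 := ih (fun i hi => h i (by simp [hi]))
    nlinarith

private lemma single_le_prod {ι : Type*} [Fintype ι] [DecidableEq ι] (f : ι → ℝ)
    (h : ∀ i, 1 ≤ f i) (k : ι) : f k ≤ ∏ i, f i := by
  rw [← Finset.mul_prod_erase Finset.univ f (Finset.mem_univ k)]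
  have h2 := prod_ge_one (Finset.univ.erase k) f (fun i _ => h i)
  nlinarith [h k]

private lemma geomle {r : ℝ} (h0 : 0 ≤ r) (h1 : r < 1) (n : ℕ) :
    ∑ i ∈ Finset.range n, r ^ i ≤ 1 / (1 - r) := by
  rw [geom_sum_eq (by linarith)]
  have h2 : 0 < 1 - r := by linarith
  have h3 : (r ^ n - 1) / (r - 1) = (1 - r ^ n) / (1 - r) := by
    rw [← neg_div_neg_eq]; ring_nf
  rw [h3]
  gcongr
  nlinarith [pow_nonneg h0 n]

private lemma coords {K : Type*} [Field K] [NumberField K] {d : ℕ} (hdeg : Module.finrank ℚ K = 2)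
    (hdpos : 0 < d) {sqd : K} (hsqd : sqd ^ 2 = -(d : K)) (z : K) :
    ∃ a b : ℚ, z = algebraMap ℚ K a + algebraMap ℚ K b * sqd := by
  have hli : LinearIndependent ℚ ![sqd, (1 : K)] := by
    rw [linearIndependent_fin2]
    refine ⟨by simp, fun a ha => ?_⟩
    rw [show (![sqd, (1:K)] 1) = 1 from rfl, show (![sqd, (1:K)] 0) = sqd from rfl] at ha
    have h1 : algebraMap ℚ K a = sqd := by
      rw [← ha, Algebra.smul_def, mul_one]
    have h2 : algebraMap ℚ K (a ^ 2) = algebraMap ℚ K (-(d : ℚ)) := by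
      rw [map_pow, h1, hsqd]; push_cast; ring
    have h3 := (algebraMap ℚ K).injective h2
    have h4 : (0 : ℚ) < d := by exact_mod_cast hdpos
    nlinarith [sq_nonneg a]
  have hcard : Fintype.card (Fin 2) = Module.finrank ℚ K := by simp [hdeg]
  let B := basisOfLinearIndependentOfCardEqFinrank hli hcard
  have hB : ⇑B = ![sqd, (1 : K)] := coe_basisOfLinearIndependentOfCardEqFinrank hli hcard
  have hz := B.sum_repr z
  rw [Fin.sum_univ_two, hB] at hz
  refine ⟨B.repr z 1, B.repr z 0, ?_⟩
  conv_lhs => rw [← hz]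
  simp only [Matrix.cons_val_zero, Matrix.cons_val_one, Matrix.head_cons, Algebra.smul_def,
    mul_one]
  ring

private lemma sprop {K : Type*} [Field K] [NumberField K] (φ : K →+* ℂ) {d : ℕ} (hdpos : 0 < d)
    {sqd : K} (hsqd : sqd ^ 2 = -(d : K)) :
    (φ sqd).re = 0 ∧ (φ sqd).im ^ 2 = (d : ℝ) := by
  have h : (φ sqd) ^ 2 = -(d : ℂ) := by
    rw [← map_pow, hsqd, map_neg, map_natCast]
  have h1 : (φ sqd).re ^ 2 - (φ sqd).im ^ 2 = -(d : ℝ) := by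
    have h1' := congrArg Complex.re h
    simp [pow_two, Complex.mul_re] at h1'
    push_cast
    linarith
  have h2 : (φ sqd).re * (φ sqd).im = 0 := by
    have h2' := congrArg Complex.im h
    simp [pow_two, Complex.mul_im] at h2'
    linarith [mul_comm (φ sqd).re (φ sqd).im]
  have hd : (1 : ℝ) ≤ d := by exact_mod_cast hdpos
  rcases mul_eq_zero.mp h2 with h3 | h3
  · exact ⟨h3, by nlinarith⟩
  · exfalso; nlinarith [sq_nonneg (φ sqd).re]

private lemma big {K : Type*} [Field K] [NumberField K] (φ : K →+* ℂ) {d : ℕ}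
    (hdeg : Module.finrank ℚ K = 2) (hdpos : 0 < d) {sqd : K} (hsqd : sqd ^ 2 = -(d : K))
    {z : K} (hz : IsIntegral ℤ z) :
    (∃ M : ℤ, Complex.normSq (φ z) = (M : ℝ)) ∧
      ((φ z).im ^ 2 < 3 / 4 → ∃ m : ℤ, z = (m : K)) := by
  obtain ⟨a, b, hab⟩ := coords hdeg hdpos hsqd z
  obtain ⟨hsre, hsim⟩ := sprop φ hdpos hsqd
  have hrat : ∀ r : ℚ, φ (algebraMap ℚ K r) = (r : ℂ) := fun r => by
    have h := eq_ratCast (φ.comp (algebraMap ℚ K)) r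
    simpa using h
  have hφz : φ z = (a : ℂ) + (b : ℂ) * φ sqd := by
    rw [hab, map_add, map_mul, hrat, hrat]
  have hre : (φ z).re = (a : ℝ) := by
    simp [hφz, Complex.add_re, Complex.mul_re, hsre]
  have him : (φ z).im = (b : ℝ) * (φ sqd).im := by
    simp [hφz, Complex.add_im, Complex.mul_im]
  by_cases hb : b = 0
  · have hza : z = algebraMap ℚ K a := by rw [hab, hb]; simp
    obtain ⟨m, hm⟩ := ratint (hza ▸ hz)
    have hzm : z = (m : K) := by rw [hza, ← hm, map_intCast]
    constructor
    · refine ⟨m ^ 2, ?_⟩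
      rw [hzm, map_intCast, Complex.normSq_apply]
      push_cast
      simp
      ring
    · exact fun _ => ⟨m, hzm⟩
  · have hwi : IsIntegral ℤ (φ z) := hz.map φ.toIntAlgHom
    have hwci : IsIntegral ℤ ((starRingEnd ℂ) (φ z)) := hwi.map (starRingEnd ℂ).toIntAlgHom
    have hw1 : φ z + (starRingEnd ℂ) (φ z) = algebraMap ℚ ℂ (2 * a) := by
      rw [Complex.add_conj, hre, eq_ratCast (algebraMap ℚ ℂ)]
      push_cast
      ring
    have hw2 : φ z * (starRingEnd ℂ) (φ z) = algebraMap ℚ ℂ (a ^ 2 + b ^ 2 * d) := by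
      rw [Complex.mul_conj, eq_ratCast (algebraMap ℚ ℂ)]
      have hns : Complex.normSq (φ z) = (a : ℝ) ^ 2 + (b : ℝ) ^ 2 * (d : ℝ) := by
        rw [Complex.normSq_apply, hre, him]
        linear_combination ((b : ℝ)) ^ 2 * hsim
      rw [hns]
      push_cast
      ring
    obtain ⟨T, hT⟩ := ratint (hw1 ▸ hwi.add hwci)
    obtain ⟨M, hM⟩ := ratint (hw2 ▸ hwi.mul hwci)
    have hnorm : Complex.normSq (φ z) = (a : ℝ) ^ 2 + (b : ℝ) ^ 2 * (d : ℝ) := by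
      rw [Complex.normSq_apply, hre, him]
      linear_combination ((b : ℝ)) ^ 2 * hsim
    have hbq : (b : ℚ) ≠ 0 := hb
    have hdq : (0 : ℚ) < d := by exact_mod_cast hdpos
    have hJq : ((4 * M - T ^ 2 : ℤ) : ℚ) = 4 * (b ^ 2 * d) := by
      push_cast
      rw [hT, hM]
      ring
    have hb2 : 0 < (b : ℚ) ^ 2 := by
      rcases lt_or_gt_of_ne hbq with h | h <;> nlinarith
    have hJpos : 0 < (4 * M - T ^ 2 : ℤ) := by
      have h0 : (0 : ℚ) < ((4 * M - T ^ 2 : ℤ) : ℚ) := by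
        rw [hJq]; nlinarith
      exact_mod_cast h0
    have hJ3 : 3 ≤ (4 * M - T ^ 2 : ℤ) := by
      rcases Int.even_or_odd T with ⟨u, hu⟩ | ⟨u, hu⟩
      · have hT2 : T ^ 2 = 4 * (u * u) := by rw [hu]; ring
        rw [hT2] at hJpos ⊢
        omega
      · have hT2 : T ^ 2 = 4 * (u * u + u) + 1 := by rw [hu]; ring
        rw [hT2] at hJpos ⊢
        omega
    refine ⟨⟨M, by rw [hnorm]; exact_mod_cast hM.symm⟩, fun hlt => absurd hlt ?_⟩
    have him2 : (φ z).im ^ 2 = (b : ℝ) ^ 2 * d := by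
      rw [him, mul_pow, hsim]
    rw [not_lt, him2]
    have h3q : (3 : ℚ) ≤ 4 * (b ^ 2 * d) := by rw [← hJq]; exact_mod_cast hJ3
    have h3r : (3 : ℝ) ≤ 4 * ((b : ℝ) ^ 2 * (d : ℝ)) := by exact_mod_cast h3q
    linarith

private noncomputable def SS {K : Type*} [Field K] (n : ℕ) (xv : Fin n → K) (Y : K) (j : ℕ) : K :=
  ∑ k : Fin n, if j ≤ (k : ℕ) then xv k / Y ^ ((k : ℕ) + 1 - j) else 0

private lemma SS_zero {K : Type*} [Field K] (n : ℕ) (xv : Fin n → K) (Y : K) :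
    SS n xv Y 0 = ∑ k, xv k / Y ^ ((k : ℕ) + 1) := by
  unfold SS; simp

private lemma SS_rec {K : Type*} [Field K] {n : ℕ} {xv : Fin n → K} {Y : K} (hY : Y ≠ 0)
    {j : ℕ} (hj : j < n) :
    Y * SS n xv Y j = xv ⟨j, hj⟩ + SS n xv Y (j + 1) := by
  unfold SS
  rw [Finset.mul_sum]
  have hxj : xv ⟨j, hj⟩ = ∑ k : Fin n, if k = ⟨j, hj⟩ then xv k else 0 := by
    rw [Finset.sum_ite_eq' Finset.univ ⟨j, hj⟩ xv, if_pos (Finset.mem_univ _)]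
  rw [hxj, ← Finset.sum_add_distrib]
  apply Finset.sum_congr rfl
  intro k _
  by_cases h1 : j ≤ (k : ℕ)
  · by_cases h2 : (k : ℕ) = j
    · have hkj : k = ⟨j, hj⟩ := Fin.ext h2
      have he : (k : ℕ) + 1 - j = 1 := by omega
      rw [if_pos h1, if_pos hkj, if_neg (by omega : ¬ j + 1 ≤ (k : ℕ)), he, pow_one, add_zero]
      field_simp
    · have h3 : j + 1 ≤ (k : ℕ) := by omega
      have h4 : k ≠ ⟨j, hj⟩ := fun hk => h2 (by rw [hk])
      have he : (k : ℕ) + 1 - j = ((k : ℕ) + 1 - (j + 1)) + 1 := by omega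
      rw [if_pos h1, if_pos h3, if_neg h4, zero_add, he, pow_succ]
      field_simp
  · have h2 : ¬ (j + 1 ≤ (k : ℕ)) := by omega
    have h3 : k ≠ ⟨j, hj⟩ := fun hk => h1 (by simp [hk])
    rw [if_neg h1, if_neg h2, if_neg h3, mul_zero, add_zero]

private lemma SS_abs {K : Type*} [Field K] {n : ℕ} {xv : Fin n → K} {Y : K} (φ : K →+* ℂ)
    (hc : 1 < ‖φ Y‖)
    (hx : ∀ k, ‖φ (xv k)‖ ≤ ‖φ Y‖ / 2) (j : ℕ) :
    ‖φ (SS n xv Y j)‖ ≤ ‖φ Y‖ / (2 * (‖φ Y‖ - 1)) := by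
  set c := ‖φ Y‖ with hcdef
  have hc0 : 0 < c := by linarith
  unfold SS
  rw [map_sum]
  have step1 := norm_sum_le Finset.univ
    (fun k : Fin n => φ (if j ≤ (k : ℕ) then xv k / Y ^ ((k : ℕ) + 1 - j) else 0))
  have step2 : ∑ k : Fin n, ‖φ (if j ≤ (k : ℕ) then xv k / Y ^ ((k : ℕ) + 1 - j) else 0)‖
      ≤ ∑ k : Fin n, (if j ≤ (k : ℕ) then (1 / 2) * (1 / c) ^ ((k : ℕ) - j) else 0) := by
    apply Finset.sum_le_sum
    intro k _
    by_cases hk : j ≤ (k : ℕ)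
    · rw [if_pos hk, if_pos hk]
      have he : (k : ℕ) + 1 - j = ((k : ℕ) - j) + 1 := by omega
      rw [map_div₀, map_pow, norm_div, norm_pow, he, pow_succ]
      have hd1 : ‖φ (xv k)‖ / (c ^ ((k : ℕ) - j) * c) ≤ (c / 2) / (c ^ ((k : ℕ) - j) * c) := by
        gcongr
        exact hx k
      have hd2 : (c / 2) / (c ^ ((k : ℕ) - j) * c) = (1 / 2) * (1 / c) ^ ((k : ℕ) - j) := by
        rw [div_pow, one_pow]
        field_simp
      calc ‖φ (xv k)‖ / (c ^ ((k : ℕ) - j) * c)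
          ≤ (c / 2) / (c ^ ((k : ℕ) - j) * c) := hd1
        _ = (1 / 2) * (1 / c) ^ ((k : ℕ) - j) := hd2
    · rw [if_neg hk, if_neg hk, map_zero, norm_zero]
  have step3 : ∑ k : Fin n, (if j ≤ (k : ℕ) then (1 / 2) * (1 / c) ^ ((k : ℕ) - j) else 0)
      ≤ c / (2 * (c - 1)) := by
    rw [Fin.sum_univ_eq_sum_range (fun k => if j ≤ k then (1 / 2) * (1 / c) ^ (k - j) else 0) n]
    rw [← Finset.sum_filter]
    have hfil : (Finset.range n).filter (fun k => j ≤ k) = Finset.Ico j n := by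
      ext a
      simp [Finset.mem_filter, Finset.mem_range, Finset.mem_Ico]
      omega
    rw [hfil, Finset.sum_Ico_eq_sum_range]
    have hsum : ∑ k ∈ Finset.range (n - j), (1 / 2) * (1 / c) ^ (j + k - j) =
        (1 / 2) * ∑ k ∈ Finset.range (n - j), (1 / c) ^ k := by
      rw [Finset.mul_sum]
      apply Finset.sum_congr rfl
      intro k _
      congr 2
      omega
    rw [hsum]
    have hgeom := geomle (r := 1 / c) (by positivity) (by rw [div_lt_one hc0]; linarith) (n - j)
    have heq : 1 / (1 - 1 / c) = c / (c - 1) := by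
      field_simp
    rw [heq] at hgeom
    calc (1 / 2) * ∑ k ∈ Finset.range (n - j), (1 / c) ^ k
        ≤ (1 / 2) * (c / (c - 1)) := by linarith
      _ = c / (2 * (c - 1)) := by field_simp
  linarith [le_trans step1 step2]

set_option maxHeartbeats 1000000 in
theorem add_sum_mem_rat_iff (d : ℕ) (hd : Squarefree d) (hdpos : 0 < d)
    (K : Type*) [Field K] [NumberField K] (hdeg : Module.finrank ℚ K = 2)
    (sqd : K) (hsqd : sqd ^ 2 = -(d : K))
    (n : ℕ) (x : Fin n → 𝓞 K)
    (y : 𝓞 K) (hy : y = 2 * ∏ k, (3 * x k + 1)) :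
    (∃ q : ℚ, (y : K) + ∑ k, (x k : K) / (y : K) ^ ((k : ℕ) + 1)
        = algebraMap ℚ K q) ↔ ∀ k, ∃ m : ℤ, (x k : K) = m := by
  have hyK : (y : K) = 2 * ∏ k, (3 * (x k : K) + 1) := by
    rw [hy]
    simp only [RingOfIntegers.coe_eq_algebraMap, map_mul, map_prod, map_add, map_ofNat, map_one]
  have hint : ∀ z : 𝓞 K, IsIntegral ℤ (z : K) := fun z => z.isIntegral_coe
  have hfac0 : ∀ k, (3 * (x k : K) + 1) ≠ 0 := by
    intro k hzero
    have hxk : (x k : K) = algebraMap ℚ K (-(1 / 3)) := by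
      rw [map_neg, map_div₀, map_one, map_ofNat]
      have h3 : (3 : K) ≠ 0 := three_ne_zero
      field_simp
      linear_combination hzero
    obtain ⟨m, hm⟩ := ratint (hxk ▸ hint (x k))
    have h1 : (3 * m : ℚ) = -1 := by rw [hm]; ring
    have h2 : (3 * m : ℤ) = -1 := by exact_mod_cast h1
    omega
  have hy0 : (y : K) ≠ 0 := by
    rw [hyK]
    exact mul_ne_zero two_ne_zero (Finset.prod_ne_zero_iff.mpr fun k _ => hfac0 k)
  constructor
  · intro ⟨q, hq⟩
    haveI : Algebra.IsAlgebraic ℚ K := Algebra.IsAlgebraic.of_finite ℚ K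
    let φ : K →+* ℂ := (IsAlgClosed.lift : K →ₐ[ℚ] ℂ).toRingHom
    have hrat : ∀ r : ℚ, φ (algebraMap ℚ K r) = (r : ℂ) := fun r => by
      have h := eq_ratCast (φ.comp (algebraMap ℚ K)) r
      simpa using h
    have hφinj : Function.Injective φ := φ.injective
    have hint3 : ∀ k, IsIntegral ℤ (3 * (x k : K) + 1) := by
      intro k
      have h1 := hint (3 * x k + 1)
      have hc : ((3 * x k + 1 : 𝓞 K) : K) = 3 * (x k : K) + 1 := by
        simp only [RingOfIntegers.coe_eq_algebraMap, map_add, map_mul, map_ofNat, map_one]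
      rwa [hc] at h1
    have hfacns : ∀ k, ∃ M : ℤ, Complex.normSq (φ (3 * (x k : K) + 1)) = M :=
      fun k => (big φ hdeg hdpos hsqd (hint3 k)).1
    have hfac1 : ∀ k, 1 ≤ Complex.normSq (φ (3 * (x k : K) + 1)) := by
      intro k
      obtain ⟨M, hM⟩ := hfacns k
      have hpos : 0 < Complex.normSq (φ (3 * (x k : K) + 1)) := by
        rw [Complex.normSq_pos]
        exact fun h => hfac0 k (hφinj (by rw [h, map_zero]))
      have hM0 : (0 : ℝ) < M := hM ▸ hpos
      have hM1 : (1 : ℤ) ≤ M := by exact_mod_cast hM0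
      rw [hM]
      exact_mod_cast hM1
    have habsf : ∀ k, 1 ≤ ‖φ (3 * (x k : K) + 1)‖ := by
      intro k
      have h1 := hfac1 k
      rw [← Complex.sq_norm] at h1
      nlinarith [norm_nonneg (φ (3 * (x k : K) + 1))]
    have hnormy : Complex.normSq (φ (y : K)) = 4 * ∏ k, Complex.normSq (φ (3 * (x k : K) + 1)) := by
      have h2 : Complex.normSq (2 : ℂ) = 4 := by
        norm_num [Complex.normSq_apply]
      rw [hyK, map_mul, map_prod, map_mul Complex.normSq, map_prod Complex.normSq, map_ofNat, h2]
    by_cases hbig8 : 8 ≤ Complex.normSq (φ (y : K))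
    · -- big case
      set c := ‖φ (y : K)‖ with hcdef
      have hc2 : c ^ 2 = Complex.normSq (φ (y : K)) := Complex.sq_norm _
      have hc83 : 8 / 3 ≤ c := by nlinarith [norm_nonneg (φ (y : K))]
      have hc1 : 1 < c := by linarith
      have h45 : c / (2 * (c - 1)) ≤ 4 / 5 := by
        rw [div_le_div_iff₀ (by linarith) (by norm_num)]
        linarith
      have hxk : ∀ k, ‖φ (x k : K)‖ ≤ c / 2 := by
        intro k
        have h1 : ‖φ (x k : K)‖ ≤ ‖φ (3 * (x k : K) + 1)‖ := by
          by_cases h0 : (x k : K) = 0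
          · rw [h0, map_zero, norm_zero]
            exact norm_nonneg _
          · have habs1 : 1 ≤ ‖φ (x k : K)‖ := by
              obtain ⟨Mx, hMx⟩ := (big φ hdeg hdpos hsqd (hint (x k))).1
              have hpos : 0 < Complex.normSq (φ (x k : K)) := by
                rw [Complex.normSq_pos]
                exact fun h => h0 (hφinj (by rw [h, map_zero]))
              have hM0 : (0 : ℝ) < Mx := hMx ▸ hpos
              have hM1 : (1 : ℤ) ≤ Mx := by exact_mod_cast hM0
              have : (1 : ℝ) ≤ Complex.normSq (φ (x k : K)) := by
                rw [hMx]; exact_mod_cast hM1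
              rw [← Complex.sq_norm] at this
              nlinarith [norm_nonneg (φ (x k : K))]
            have he : φ (3 * (x k : K) + 1) = 3 * φ (x k : K) + 1 := by
              rw [map_add, map_mul, map_ofNat, map_one]
            have h3 : ‖3 * φ (x k : K)‖ = 3 * ‖φ (x k : K)‖ := by
              rw [norm_mul]
              norm_num
            have h4 : ‖3 * φ (x k : K)‖ ≤ ‖3 * φ (x k : K) + 1‖ + 1 := by
              calc ‖3 * φ (x k : K)‖ = ‖(3 * φ (x k : K) + 1) + (-1)‖ := by
                    ring_nf
                _ ≤ ‖3 * φ (x k : K) + 1‖ + ‖-1‖ := norm_add_le _ _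
                _ = ‖3 * φ (x k : K) + 1‖ + 1 := by norm_num
            rw [he]
            rw [h3] at h4
            linarith [habs1]
        have h2 : ‖φ (3 * (x k : K) + 1)‖ ≤ ∏ j, ‖φ (3 * (x j : K) + 1)‖ :=
          single_le_prod _ habsf k
        have h3 : c = 2 * ∏ j, ‖φ (3 * (x j : K) + 1)‖ := by
          rw [hcdef, hyK, map_mul, map_prod, norm_mul, norm_prod, map_ofNat,
            Complex.norm_ofNat]
        linarith
      have hsum_eq : (y : K) + SS n (fun k => (x k : K)) (y : K) 0 = algebraMap ℚ K q := by
        rw [SS_zero]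
        exact hq
      have hyim : ((φ (y : K)).im) ^ 2 < 3 / 4 := by
        have h1 : φ (y : K) + φ (SS n (fun k => (x k : K)) (y : K) 0) = (q : ℂ) := by
          rw [← map_add, hsum_eq, hrat]
        have h2 : (φ (y : K)).im = -(φ (SS n (fun k => (x k : K)) (y : K) 0)).im := by
          have h2' := congrArg Complex.im h1
          simp [Complex.add_im, Complex.ratCast_im] at h2'
          linarith
        have h3 := (Complex.abs_im_le_norm (φ (SS n (fun k => (x k : K)) (y : K) 0))).trans
          ((SS_abs φ hc1 hxk 0).trans h45)
        have h4 := abs_le.mp h3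
        rw [h2]
        nlinarith [h4.1, h4.2]
      obtain ⟨My, hMy⟩ := (big φ hdeg hdpos hsqd (hint y)).2 hyim
      have main : ∀ j : ℕ, j ≤ n →
          (∃ r : ℚ, SS n (fun k => (x k : K)) (y : K) j = algebraMap ℚ K r) ∧
          (∀ i : Fin n, (i : ℕ) < j → ∃ m : ℤ, (x i : K) = m) := by
        intro j
        induction j with
        | zero =>
          intro _
          refine ⟨⟨q - (My : ℚ), ?_⟩, fun i hi => absurd hi (Nat.not_lt_zero _)⟩
          rw [map_sub]
          have h1 : algebraMap ℚ K ((My : ℚ)) = (y : K) := by rw [map_intCast, ← hMy]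
          rw [h1]
          linear_combination hsum_eq
        | succ j ih =>
          intro hj1
          obtain ⟨⟨r, hr⟩, hprev⟩ := ih (by omega)
          have hjn : j < n := by omega
          have hrec := SS_rec (xv := fun k => (x k : K)) hy0 hjn
          have hx_eq : (x ⟨j, hjn⟩ : K)
              = algebraMap ℚ K ((My : ℚ) * r) - SS n (fun k => (x k : K)) (y : K) (j + 1) := by
            have h1 : algebraMap ℚ K ((My : ℚ) * r) = (y : K) * SS n (fun k => (x k : K)) (y : K) j := by
              rw [map_mul, map_intCast, ← hMy, ← hr]
            rw [h1]
            linear_combination -hrec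
          have him : ((φ (x ⟨j, hjn⟩ : K)).im) ^ 2 < 3 / 4 := by
            have h1 : φ (x ⟨j, hjn⟩ : K)
                = (((My : ℚ) * r : ℚ) : ℂ) - φ (SS n (fun k => (x k : K)) (y : K) (j + 1)) := by
              rw [hx_eq, map_sub, hrat]
            have h2 : (φ (x ⟨j, hjn⟩ : K)).im
                = -(φ (SS n (fun k => (x k : K)) (y : K) (j + 1))).im := by
              rw [h1]
              simp [Complex.sub_im]
            have h3 := (Complex.abs_im_le_norm (φ (SS n (fun k => (x k : K)) (y : K) (j + 1)))).trans
              ((SS_abs φ hc1 hxk (j + 1)).trans h45)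
            have h4 := abs_le.mp h3
            rw [h2]
            nlinarith [h4.1, h4.2]
          obtain ⟨m, hm⟩ := (big φ hdeg hdpos hsqd (hint _)).2 him
          refine ⟨⟨(My : ℚ) * r - (m : ℚ), ?_⟩, ?_⟩
          · rw [map_sub, map_intCast, ← hm]
            linear_combination hx_eq
          · intro i hi
            by_cases hij : (i : ℕ) < j
            · exact hprev i hij
            · have hieq : i = ⟨j, hjn⟩ := Fin.ext (show (i : ℕ) = j by omega)
              rw [hieq]
              exact ⟨m, hm⟩
      exact fun k => (main n le_rfl).2 k k.isLt
    · -- small case: all x k = 0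
      intro k
      push_neg at hbig8
      have hsingle := single_le_prod _ hfac1 k
      have hprodlt : ∏ j, Complex.normSq (φ (3 * (x j : K) + 1)) < 2 := by
        rw [hnormy] at hbig8
        linarith
      obtain ⟨M, hM⟩ := hfacns k
      have hM1 : M = 1 := by
        have ha := hfac1 k
        rw [hM] at ha hsingle
        have h1 : (1 : ℤ) ≤ M := by exact_mod_cast ha
        have h2 : (M : ℝ) < 2 := lt_of_le_of_lt hsingle hprodlt
        have h3 : (M : ℤ) < 2 := by exact_mod_cast h2
        omega
      have habs1 : ‖φ (3 * (x k : K) + 1)‖ = 1 := by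
        rw [Complex.norm_def, hM, hM1]
        norm_num
      have he : φ (3 * (x k : K) + 1) = 3 * φ (x k : K) + 1 := by
        rw [map_add, map_mul, map_ofNat, map_one]
      have h3 : ‖3 * φ (x k : K)‖ = 3 * ‖φ (x k : K)‖ := by
        rw [norm_mul]
        norm_num
      have h4 : ‖3 * φ (x k : K)‖ ≤ ‖3 * φ (x k : K) + 1‖ + 1 := by
        calc ‖3 * φ (x k : K)‖ = ‖(3 * φ (x k : K) + 1) + (-1)‖ := by
              ring_nf
          _ ≤ ‖3 * φ (x k : K) + 1‖ + ‖-1‖ := norm_add_le _ _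
          _ = ‖3 * φ (x k : K) + 1‖ + 1 := by norm_num
      have hxb : ‖φ (x k : K)‖ ≤ 2 / 3 := by
        rw [← he, habs1] at h4
        rw [h3] at h4
        linarith
      obtain ⟨Mx, hMx⟩ := (big φ hdeg hdpos hsqd (hint (x k))).1
      have hlt1 : Complex.normSq (φ (x k : K)) < 1 := by
        rw [← Complex.sq_norm]
        nlinarith [norm_nonneg (φ (x k : K))]
      have hMx0 : Mx = 0 := by
        have h0 : (0 : ℝ) ≤ Complex.normSq (φ (x k : K)) := Complex.normSq_nonneg _
        rw [hMx] at hlt1 h0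
        have h1 : (Mx : ℤ) < 1 := by exact_mod_cast hlt1
        have h2 : (0 : ℤ) ≤ Mx := by exact_mod_cast h0
        omega
    
      have hzero : φ (x k : K) = 0 := by
        rw [← Complex.normSq_eq_zero, hMx, hMx0]
        norm_num
      refine ⟨0, ?_⟩
      have := hφinj (by rw [hzero, map_zero] : φ (x k : K) = φ 0)
      rw [this]
      norm_num
  · intro hx
    choose m hm using hx
    refine ⟨2 * ∏ k, (3 * (m k : ℚ) + 1)
      + ∑ k : Fin n, (m k : ℚ) / (2 * ∏ j, (3 * (m j : ℚ) + 1)) ^ ((k : ℕ) + 1), ?_⟩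
    have hyQ : (y : K) = algebraMap ℚ K (2 * ∏ k, (3 * (m k : ℚ) + 1)) := by
      rw [hyK, map_mul, map_prod, map_ofNat]
      congr 1
      apply Finset.prod_congr rfl
      intro k _
      rw [map_add, map_mul, map_ofNat, map_one, map_intCast, hm k]
    rw [map_add, map_sum, hyQ]
    congr 1
    apply Finset.sum_congr rfl
    intro k _
    rw [map_div₀, map_pow, map_intCast, hm k, ← hyQ]
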